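/- Let H be a finite-dimensional Hopf algebra over a field k with bijective antipode, and let {e_a} be a basis of H with dual basis {f^a} of H*. Let H act on itself by left multiplication (h ⊳ g = hg) and let H* act on H by the left coregular action φ ⊳ g = Σ g₍₁₎ ⟨φ, g₍₂₎⟩. Then every linear endomorphism of H lies in the subalgebra of Lin(H) generated by these two actions; explicitly, the rank-one operator g ↦ h⟨φ, g⟩ equals the operator g ↦ Σ_a h (S⁻¹(e_a)₍₁₎) ⊳ (⟨φ, (e_a)₍₂₎⟩ f^a ⊳ g). -/

import Mathlib

open TensorProduct Coalgebra LinearMap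

variable (k H : Type*) [Field k] [Ring H] [HopfAlgebra k H]

/-- The left coregular action of `φ ∈ H*` on `H`: `φ ⊳ g = Σ g₍₁₎ ⟨φ, g₍₂₎⟩`. -/
noncomputable def coreg (φ : Module.Dual k H) : H →ₗ[k] H :=
  (TensorProduct.rid k H).toLinearMap ∘ₗ (LinearMap.lTensor H φ) ∘ₗ
    (Coalgebra.comul (R := k))

/-- For `φ ∈ H*` and a skew-antipode `S⁻¹`, the element
`Σ ⟨φ, a₍₂₎⟩ S⁻¹(a₍₁₎)` of `H`. -/
noncomputable def sweedlerWeight (Sinv : H →ₗ[k] H) (φ : Module.Dual k H) : H →ₗ[k] H :=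
  (TensorProduct.rid k H).toLinearMap ∘ₗ (LinearMap.lTensor H φ) ∘ₗ
    (LinearMap.rTensor H Sinv) ∘ₗ (Coalgebra.comul (R := k))

section Aux


section Conv
variable {R C A : Type*} [CommRing R] [AddCommGroup C] [Module R C] [Coalgebra R C]
  [AddCommGroup A] [Module R A]

noncomputable def gconv (μ : A ⊗[R] A →ₗ[R] A) (f g : C →ₗ[R] A) : C →ₗ[R] A :=
  μ ∘ₗ TensorProduct.map f g ∘ₗ Coalgebra.comul

noncomputable def gone (u : A) : C →ₗ[R] A :=
  LinearMap.toSpanSingleton R A u ∘ₗ Coalgebra.counit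

lemma gconv_repr (μ : A ⊗[R] A →ₗ[R] A) (f g : C →ₗ[R] A) (c : C) {ι : Type*} (r : Coalgebra.Repr R c ι) :
    gconv μ f g c = ∑ i ∈ r.index, μ (f (r.left i) ⊗ₜ[R] g (r.right i)) := by
  simp [gconv, ← r.eq, map_sum]

lemma gone_apply (u : A) (c : C) : gone (R := R) u c = Coalgebra.counit (R := R) c • u := rfl

lemma sum_counit_smul {c : C} {ι : Type*} (r : Coalgebra.Repr R c ι) :
    ∑ i ∈ r.index, Coalgebra.counit (R := R) (r.left i) • r.right i = c := by
  have h := congrArg (TensorProduct.lid R C) (Coalgebra.sum_counit_tmul_eq r)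
  rw [map_sum] at h
  simp only [lid_tmul] at h
  simpa using h

lemma sum_smul_counit {c : C} {ι : Type*} (r : Coalgebra.Repr R c ι) :
    ∑ i ∈ r.index, Coalgebra.counit (R := R) (r.right i) • r.left i = c := by
  have h := congrArg (TensorProduct.rid R C) (Coalgebra.sum_tmul_counit_eq r)
  rw [map_sum] at h
  simp only [rid_tmul] at h
  simpa using h

lemma gconv_one_left (μ : A ⊗[R] A →ₗ[R] A) (u : A) (hul : ∀ x, μ (u ⊗ₜ[R] x) = x)
    (f : C →ₗ[R] A) : gconv μ (gone u) f = f := by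
  ext c
  let r := ℛ R c
  rw [gconv_repr _ _ _ _ r]
  calc ∑ i ∈ r.index, μ (gone u (r.left i) ⊗ₜ[R] f (r.right i))
      = ∑ i ∈ r.index, f (Coalgebra.counit (R := R) (r.left i) • r.right i) := by
        refine Finset.sum_congr rfl fun i _ => ?_
        rw [gone_apply, ← smul_tmul', map_smul, hul, map_smul]
    _ = f c := by rw [← map_sum, _root_.sum_counit_smul r]

lemma gconv_one_right (μ : A ⊗[R] A →ₗ[R] A) (u : A) (hur : ∀ x, μ (x ⊗ₜ[R] u) = x)
    (f : C →ₗ[R] A) : gconv μ f (gone u) = f := by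
  ext c
  let r := ℛ R c
  rw [gconv_repr _ _ _ _ r]
  calc ∑ i ∈ r.index, μ (f (r.left i) ⊗ₜ[R] gone u (r.right i))
      = ∑ i ∈ r.index, f (Coalgebra.counit (R := R) (r.right i) • r.left i) := by
        refine Finset.sum_congr rfl fun i _ => ?_
        rw [gone_apply, tmul_smul, map_smul, hur, map_smul]
    _ = f c := by rw [← map_sum, sum_smul_counit r]

lemma gconv_assoc (μ : A ⊗[R] A →ₗ[R] A)
    (hassoc : ∀ x y z, μ (μ (x ⊗ₜ[R] y) ⊗ₜ[R] z) = μ (x ⊗ₜ[R] μ (y ⊗ₜ[R] z)))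
    (f g h : C →ₗ[R] A) : gconv μ (gconv μ f g) h = gconv μ f (gconv μ g h) := by
  ext c
  let r := ℛ R c
  let r1 : (i : r.ι) → Coalgebra.Repr R (r.left i) (C × C) := fun i => ℛ R (r.left i)
  let r2 : (i : r.ι) → Coalgebra.Repr R (r.right i) (C × C) := fun i => ℛ R (r.right i)
  have key := congrArg (μ ∘ₗ TensorProduct.map f (μ ∘ₗ TensorProduct.map g h))
    (Coalgebra.sum_tmul_tmul_eq r r1 r2)
  simp only [map_sum, LinearMap.comp_apply, TensorProduct.map_tmul] at key
  rw [gconv_repr _ _ _ _ r, gconv_repr _ _ _ _ r]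
  calc ∑ i ∈ r.index, μ (gconv μ f g (r.left i) ⊗ₜ[R] h (r.right i))
      = ∑ i ∈ r.index, ∑ j ∈ (r1 i).index,
          μ (f ((r1 i).left j) ⊗ₜ[R] μ (g ((r1 i).right j) ⊗ₜ[R] h (r.right i))) := by
        refine Finset.sum_congr rfl fun i _ => ?_
        rw [gconv_repr _ _ _ _ (r1 i), sum_tmul, map_sum]
        exact Finset.sum_congr rfl fun j _ => hassoc _ _ _
    _ = ∑ i ∈ r.index, ∑ j ∈ (r2 i).index,
          μ (f (r.left i) ⊗ₜ[R] μ (g ((r2 i).left j) ⊗ₜ[R] h ((r2 i).right j))) := key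
    _ = ∑ i ∈ r.index, μ (f (r.left i) ⊗ₜ[R] gconv μ g h (r.right i)) := by
        refine Finset.sum_congr rfl fun i _ => ?_
        rw [gconv_repr _ _ _ _ (r2 i), tmul_sum, map_sum]

lemma gconv_add_left (μ : A ⊗[R] A →ₗ[R] A) (f f' g : C →ₗ[R] A) :
    gconv μ (f + f') g = gconv μ f g + gconv μ f' g := by
  simp [gconv, TensorProduct.map_add_left, LinearMap.add_comp, LinearMap.comp_add]

lemma gconv_add_right (μ : A ⊗[R] A →ₗ[R] A) (f g g' : C →ₗ[R] A) :
    gconv μ f (g + g') = gconv μ f g + gconv μ f g' := by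
  simp [gconv, TensorProduct.map_add_right, LinearMap.add_comp, LinearMap.comp_add]

lemma gconv_smul_left (μ : A ⊗[R] A →ₗ[R] A) (r : R) (f g : C →ₗ[R] A) :
    gconv μ (r • f) g = r • gconv μ f g := by
  simp [gconv, TensorProduct.map_smul_left, LinearMap.smul_comp, LinearMap.comp_smul]

lemma gconv_smul_right (μ : A ⊗[R] A →ₗ[R] A) (r : R) (f g : C →ₗ[R] A) :
    gconv μ f (r • g) = r • gconv μ f g := by
  simp [gconv, TensorProduct.map_smul_right, LinearMap.smul_comp, LinearMap.comp_smul]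

noncomputable def gconvL (μ : A ⊗[R] A →ₗ[R] A) :
    (C →ₗ[R] A) →ₗ[R] (C →ₗ[R] A) →ₗ[R] (C →ₗ[R] A) :=
  LinearMap.mk₂ R (gconv μ) (gconv_add_left μ) (gconv_smul_left μ)
    (gconv_add_right μ) (gconv_smul_right μ)

end Conv

section Hopf
variable {k H : Type*} [Field k] [Ring H] [HopfAlgebra k H]

local notation "S" => HopfAlgebra.antipode (R := k) (A := H)

noncomputable def mulRepr {a b : H} {ι κ : Type*} (ra : Coalgebra.Repr k a ι) (rb : Coalgebra.Repr k b κ) :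
    Coalgebra.Repr k (a * b) (ι × κ) where
  index := ra.index ×ˢ rb.index
  left := fun p => ra.left p.1 * rb.left p.2
  right := fun p => ra.right p.1 * rb.right p.2
  eq := by
    rw [Finset.sum_product]
    calc ∑ i ∈ ra.index, ∑ j ∈ rb.index,
          (ra.left i * rb.left j) ⊗ₜ[k] (ra.right i * rb.right j)
        = (∑ i ∈ ra.index, ra.left i ⊗ₜ[k] ra.right i) *
          (∑ j ∈ rb.index, rb.left j ⊗ₜ[k] rb.right j) := by
          rw [Finset.sum_mul_sum]
          exact Finset.sum_congr rfl fun i _ => Finset.sum_congr rfl fun j _ =>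
            (Algebra.TensorProduct.tmul_mul_tmul _ _ _ _).symm
      _ = Coalgebra.comul (R := k) (a * b) := by rw [ra.eq, rb.eq, Bialgebra.comul_mul]

lemma antipode_one' : S (1 : H) = 1 := by
  have h2 := HopfAlgebra.sum_mul_antipode_eq_smul (R := k)
    (⟨(Finset.univ : Finset Unit), fun _ => 1, fun _ => 1, by
      simp [Algebra.TensorProduct.one_def]⟩ : Coalgebra.Repr k (1 : H) Unit)
  simpa using h2

/-- Second-level convolution multiplication on `H →ₗ[k] H`. -/
noncomputable def mu2 : (H →ₗ[k] H) ⊗[k] (H →ₗ[k] H) →ₗ[k] (H →ₗ[k] H) :=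
  TensorProduct.lift (gconvL (LinearMap.mul' k H))

lemma mu2_tmul (f g : H →ₗ[k] H) : mu2 (f ⊗ₜ[k] g) = gconv (LinearMap.mul' k H) f g := rfl

lemma hassoc1 (x y z : H) :
    LinearMap.mul' k H (LinearMap.mul' k H (x ⊗ₜ[k] y) ⊗ₜ[k] z) =
    LinearMap.mul' k H (x ⊗ₜ[k] LinearMap.mul' k H (y ⊗ₜ[k] z)) := by
  simp [mul_assoc]

lemma hul1 (x : H) : LinearMap.mul' k H ((1 : H) ⊗ₜ[k] x) = x := by simp

lemma hur1 (x : H) : LinearMap.mul' k H (x ⊗ₜ[k] (1 : H)) = x := by simp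

lemma hassoc2 (f g h : H →ₗ[k] H) :
    mu2 (mu2 (f ⊗ₜ[k] g) ⊗ₜ[k] h) = mu2 (f ⊗ₜ[k] mu2 (g ⊗ₜ[k] h)) := by
  simp only [mu2_tmul]
  exact gconv_assoc _ hassoc1 f g h

lemma hul2 (f : H →ₗ[k] H) : mu2 (gone (1 : H) ⊗ₜ[k] f) = f := by
  rw [mu2_tmul]; exact gconv_one_left _ _ hul1 f

lemma hur2 (f : H →ₗ[k] H) : mu2 (f ⊗ₜ[k] gone (1 : H)) = f := by
  rw [mu2_tmul]; exact gconv_one_right _ _ hur1 f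

noncomputable def Mmap : H →ₗ[k] (H →ₗ[k] H) := LinearMap.mul k H

noncomputable def Gmap : H →ₗ[k] (H →ₗ[k] H) :=
  LinearMap.llcomp k H H H S ∘ₗ Mmap

noncomputable def Fmap : H →ₗ[k] (H →ₗ[k] H) :=
  ((LinearMap.mul k H).flip.compl₂ S) ∘ₗ S

lemma Mmap_apply (a b : H) : Mmap (k := k) a b = a * b := rfl
lemma Gmap_apply (a b : H) : Gmap (k := k) a b = S (a * b) := rfl
lemma Fmap_apply (a b : H) : Fmap (k := k) a b = S b * S a := rfl

lemma GM_eq : gconv mu2 (Gmap (k := k) (H := H)) Mmap = gone (gone (1 : H)) := by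
  refine LinearMap.ext fun a => LinearMap.ext fun b => ?_
  have ra := ℛ k a
  have rb := ℛ k b
  rw [gconv_repr _ _ _ _ ra]
  rw [LinearMap.sum_apply]
  calc ∑ i ∈ ra.index, (mu2 (Gmap (k := k) (ra.left i) ⊗ₜ[k] Mmap (ra.right i))) b
      = ∑ i ∈ ra.index, ∑ j ∈ rb.index,
          S (ra.left i * rb.left j) * (ra.right i * rb.right j) := by
        refine Finset.sum_congr rfl fun i _ => ?_
        rw [mu2_tmul, gconv_repr _ _ _ _ rb]
        exact Finset.sum_congr rfl fun j _ => rfl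
      _ = ∑ p ∈ (mulRepr ra rb).index,
            S ((mulRepr ra rb).left p) * (mulRepr ra rb).right p := by
        exact (Finset.sum_product (s := ra.index) (t := rb.index)
            (f := fun p => S ((mulRepr ra rb).left p) * (mulRepr ra rb).right p)).symm
      _ = Coalgebra.counit (R := k) (a * b) • (1 : H) :=
        HopfAlgebra.sum_antipode_mul_eq_smul (R := k) (mulRepr ra rb)
      _ = (gone (gone (1 : H)) a) b := by
        rw [gone_apply, Bialgebra.counit_mul]
        simp [gone_apply, smul_smul]


lemma MF_eq : gconv mu2 (Mmap (k := k) (H := H)) Fmap = gone (gone (1 : H)) := by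
  refine LinearMap.ext fun a => LinearMap.ext fun b => ?_
  have ra := ℛ k a
  have rb := ℛ k b
  rw [gconv_repr _ _ _ _ ra, LinearMap.sum_apply]
  calc ∑ i ∈ ra.index, (mu2 (Mmap (k := k) (ra.left i) ⊗ₜ[k] Fmap (ra.right i))) b
      = ∑ i ∈ ra.index, ra.left i *
          ((∑ j ∈ rb.index, rb.left j * S (rb.right j)) * S (ra.right i)) := by
        refine Finset.sum_congr rfl fun i _ => ?_
        rw [mu2_tmul, gconv_repr _ _ _ _ rb, Finset.sum_mul, Finset.mul_sum]
        refine Finset.sum_congr rfl fun j _ => ?_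
        show LinearMap.mul' k H ((ra.left i * rb.left j) ⊗ₜ[k] (S (rb.right j) * S (ra.right i)))
          = _
        simp [mul_assoc]
    _ = ∑ i ∈ ra.index, ra.left i *
          ((Coalgebra.counit (R := k) b • (1 : H)) * S (ra.right i)) := by
        rw [HopfAlgebra.sum_mul_antipode_eq_smul (R := k) rb]
    _ = Coalgebra.counit (R := k) b • ∑ i ∈ ra.index, ra.left i * S (ra.right i) := by
        rw [Finset.smul_sum]
        exact Finset.sum_congr rfl fun i _ => by
          rw [smul_mul_assoc, one_mul, mul_smul_comm]
    _ = Coalgebra.counit (R := k) b • (Coalgebra.counit (R := k) a • (1 : H)) := by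
        rw [HopfAlgebra.sum_mul_antipode_eq_smul (R := k) ra]
    _ = (gone (gone (1 : H)) a) b := by
        rw [gone_apply]
        simp [gone_apply, smul_smul, mul_comm]

lemma antipode_mul' (a b : H) : S (a * b) = S b * S a := by
  have hGF : (Gmap (k := k) (H := H)) = Fmap := by
    calc Gmap (k := k) (H := H)
        = gconv mu2 Gmap (gone (gone (1 : H))) := (gconv_one_right (R := k) (C := H) (A := H →ₗ[k] H) mu2 _ hur2 _).symm
      _ = gconv mu2 Gmap (gconv mu2 Mmap Fmap) := by rw [MF_eq]
      _ = gconv mu2 (gconv mu2 Gmap Mmap) Fmap := (gconv_assoc (R := k) (C := H) (A := H →ₗ[k] H) mu2 hassoc2 _ _ _).symm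
      _ = gconv mu2 (gone (gone (1 : H))) Fmap := by rw [GM_eq]
      _ = Fmap := gconv_one_left (R := k) (C := H) (A := H →ₗ[k] H) mu2 _ hul2 _
  have := congrFun (congrArg (fun (f : H →ₗ[k] (H →ₗ[k] H)) => ⇑(f a)) hGF) b
  simpa [Gmap_apply, Fmap_apply] using this

lemma skew_antipode_sum (Sinv : H →ₗ[k] H)
    (hS1 : Sinv ∘ₗ HopfAlgebra.antipode (R := k) (A := H) = LinearMap.id)
    (hS2 : HopfAlgebra.antipode (R := k) (A := H) ∘ₗ Sinv = LinearMap.id)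
    {x : H} {ι : Type*} (r : Coalgebra.Repr k x ι) :
    ∑ i ∈ r.index, Sinv (r.right i) * r.left i = Coalgebra.counit (R := k) x • 1 := by
  have hinj : Function.Injective (S : H →ₗ[k] H) := by
    intro u v huv
    have h1 := congrFun (congrArg (fun (f : H →ₗ[k] H) => ⇑f) hS1) u
    have h2 := congrFun (congrArg (fun (f : H →ₗ[k] H) => ⇑f) hS1) v
    simp only [LinearMap.coe_comp, Function.comp_apply, LinearMap.id_coe, id_eq] at h1 h2
    rw [← h1, ← h2, huv]
  apply hinj
  rw [map_sum, map_smul, antipode_one']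
  calc ∑ i ∈ r.index, S (Sinv (r.right i) * r.left i)
      = ∑ i ∈ r.index, S (r.left i) * r.right i := by
        refine Finset.sum_congr rfl fun i _ => ?_
        rw [antipode_mul']
        congr 1
        exact congrFun (congrArg (fun (f : H →ₗ[k] H) => ⇑f) hS2) (r.right i)
    _ = Coalgebra.counit (R := k) x • 1 := HopfAlgebra.sum_antipode_mul_eq_smul (R := k) r

end Hopf

section Main
variable {k H : Type*} [Field k] [Ring H] [HopfAlgebra k H]

lemma coreg_repr (ψ : Module.Dual k H) (x : H) {ι : Type*} (r : Coalgebra.Repr k x ι) :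
    coreg k H ψ x = ∑ i ∈ r.index, ψ (r.right i) • r.left i := by
  simp [coreg, ← r.eq, map_sum]

lemma sweedler_repr (Sinv : H →ₗ[k] H) (φ : Module.Dual k H) (x : H)
    {ι : Type*} (r : Coalgebra.Repr k x ι) :
    sweedlerWeight k H Sinv φ x = ∑ i ∈ r.index, φ (r.right i) • Sinv (r.left i) := by
  simp [sweedlerWeight, ← r.eq, map_sum]

/-- The trilinear gadget `x ⊗ (y ⊗ z) ↦ φ(z) • (h * Sinv y * x)`. -/
noncomputable def Psi (h : H) (Sinv : H →ₗ[k] H) (φ : Module.Dual k H) :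
    H ⊗[k] (H ⊗[k] H) →ₗ[k] H :=
  (LinearMap.mul' k H ∘ₗ TensorProduct.map (LinearMap.mulLeft k h) LinearMap.id ∘ₗ
    (TensorProduct.comm k H H).toLinearMap) ∘ₗ
  LinearMap.lTensor H
    ((TensorProduct.rid k H).toLinearMap ∘ₗ LinearMap.lTensor H φ ∘ₗ LinearMap.rTensor H Sinv)

lemma Psi_tmul (h : H) (Sinv : H →ₗ[k] H) (φ : Module.Dual k H) (x y z : H) :
    Psi h Sinv φ (x ⊗ₜ[k] (y ⊗ₜ[k] z)) = φ z • (h * Sinv y * x) := by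
  simp [Psi, mul_smul_comm, smul_mul_assoc, mul_assoc]

end Main

end Aux

/-- let `H` be a finite-dimensional Hopf algebra with bijective antipode
(`Sinv` the inverse of the antipode), `{e_a}` a basis with dual basis `{f^a}`. Then every
rank-one operator `g ↦ ⟨φ, g⟩ h` lies in the algebra generated by the left regular
representation of `H` and the left coregular representation of `H*`; explicitly
`⟨φ, g⟩ h = Σ_a h · (S⁻¹((e_a)₍₁₎) ⟨φ, (e_a)₍₂₎⟩) · (f^a ⊳ g)`. -/
theorem rank_one_generated [FiniteDimensional k H]
    (Sinv : H →ₗ[k] H)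
    (hS1 : Sinv ∘ₗ HopfAlgebra.antipode (R := k) (A := H) = LinearMap.id)
    (hS2 : HopfAlgebra.antipode (R := k) (A := H) ∘ₗ Sinv = LinearMap.id)
    {ι : Type*} [Fintype ι] [DecidableEq ι] (B : Module.Basis ι k H)
    (h : H) (φ : Module.Dual k H) (g : H) :
    φ g • h =
      ∑ a : ι, h * sweedlerWeight k H Sinv φ (B a) * coreg k H (B.dualBasis a) g := by
  classical
  have rg : Coalgebra.Repr k g (H × H) := ℛ k g
  have rl : (i : rg.ι) → Coalgebra.Repr k (rg.left i) (H × H) := fun i => ℛ k (rg.left i)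
  have rr : (i : rg.ι) → Coalgebra.Repr k (rg.right i) (H × H) := fun i => ℛ k (rg.right i)
  have hB : ∀ x : H, ∑ a : ι, B.dualBasis a x • B a = x := by
    intro x
    simp only [Module.Basis.dualBasis_apply]
    exact B.sum_repr x
  have key := congrArg (Psi (k := k) h Sinv φ) (Coalgebra.sum_tmul_tmul_eq rg rl rr)
  simp only [map_sum, Psi_tmul] at key
  symm
  calc ∑ a : ι, h * sweedlerWeight k H Sinv φ (B a) * coreg k H (B.dualBasis a) g
      = ∑ a : ι, ∑ i ∈ rg.index,
          B.dualBasis a (rg.right i) • (h * sweedlerWeight k H Sinv φ (B a) * rg.left i) := by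
        refine Finset.sum_congr rfl fun a _ => ?_
        rw [coreg_repr _ _ rg, Finset.mul_sum]
        exact Finset.sum_congr rfl fun i _ => mul_smul_comm _ _ _
    _ = ∑ i ∈ rg.index, ∑ a : ι,
          B.dualBasis a (rg.right i) • (h * sweedlerWeight k H Sinv φ (B a) * rg.left i) :=
        Finset.sum_comm
    _ = ∑ i ∈ rg.index, h * sweedlerWeight k H Sinv φ (rg.right i) * rg.left i := by
        refine Finset.sum_congr rfl fun i _ => ?_
        conv_rhs => rw [← hB (rg.right i)]
        rw [map_sum, Finset.mul_sum, Finset.sum_mul]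
        refine Finset.sum_congr rfl fun a _ => ?_
        rw [map_smul, mul_smul_comm, smul_mul_assoc]
    _ = ∑ i ∈ rg.index, ∑ j ∈ (rr i).index,
          φ ((rr i).right j) • (h * Sinv ((rr i).left j) * rg.left i) := by
        refine Finset.sum_congr rfl fun i _ => ?_
        rw [sweedler_repr _ _ _ (rr i), Finset.mul_sum, Finset.sum_mul]
        refine Finset.sum_congr rfl fun j _ => ?_
        rw [mul_smul_comm, smul_mul_assoc]
    _ = ∑ i ∈ rg.index, ∑ j ∈ (rl i).index,
          φ (rg.right i) • (h * Sinv ((rl i).right j) * (rl i).left j) := key.symm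
    _ = ∑ i ∈ rg.index,
          φ (rg.right i) • (h * (Coalgebra.counit (R := k) (rg.left i) • (1 : H))) := by
        refine Finset.sum_congr rfl fun i _ => ?_
        rw [← skew_antipode_sum Sinv hS1 hS2 (rl i), Finset.mul_sum, Finset.smul_sum]
        exact Finset.sum_congr rfl fun j _ => by rw [mul_assoc]
    _ = ∑ i ∈ rg.index, φ (Coalgebra.counit (R := k) (rg.left i) • rg.right i) • h := by
        refine Finset.sum_congr rfl fun i _ => ?_
        rw [map_smul, mul_smul_comm, mul_one, smul_smul]; rw [smul_eq_mul, mul_comm]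
    _ = φ g • h := by
        rw [← Finset.sum_smul, ← map_sum, _root_.sum_counit_smul rg]
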